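/- Let n be a positive integer and a, b complex numbers with b ≠ 2, 1 + a − b ≠ 0, b + n − 2 ≠ 0, and such that (b)_k ≠ 0 and (2 + n(1 − a)/(b − 2))_k ≠ 0 for all 0 ≤ k ≤ n − 1. Then the terminating series satisfies ₃F₂(2, a, 1 − n; b, 2 + n(1 − a)/(b − 2); 1) = (an − b − n + 2)(b − 1) / ((1 + a − b)(b + n − 2)). -/

import Mathlib

open Complex Finset

/-- The generalized hypergeometric series ₃F₂(a₁,a₂,a₃; b₁,b₂; 1) over ℂ. -/
noncomputable def hyp3F2 (a₁ a₂ a₃ b₁ b₂ : ℂ) : ℂ :=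
  ∑' k : ℕ,
    ((ascPochhammer ℂ k).eval a₁ * (ascPochhammer ℂ k).eval a₂ * (ascPochhammer ℂ k).eval a₃) /
    ((ascPochhammer ℂ k).eval b₁ * (ascPochhammer ℂ k).eval b₂ * (Nat.factorial k : ℂ))

/-- `x` is not a nonpositive integer (equivalently, not a pole of Γ). -/
def NotNonposInt (x : ℂ) : Prop := ∀ m : ℕ, x ≠ -(m : ℂ)

lemma asc_two_eval (k : ℕ) : (ascPochhammer ℂ k).eval 2 = ((k : ℂ) + 1) * (Nat.factorial k : ℂ) := by
  induction k with
  | zero => simp [ascPochhammer_zero]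
  | succ m ih =>
      rw [ascPochhammer_succ_eval, ih]
      push_cast [Nat.factorial_succ]
      ring

lemma asc_one_sub_n (n k : ℕ) (hn : 0 < n) (h : n ≤ k) :
    (ascPochhammer ℂ k).eval (1 - (n : ℂ)) = 0 := by
  induction k with
  | zero => omega
  | succ m ih =>
      rw [ascPochhammer_succ_eval]
      rcases Nat.lt_or_ge m n with hm | hm
      · have : m + 1 = n := by omega
        subst this
        have : (1 : ℂ) - (↑(m+1) : ℂ) + (m : ℂ) = 0 := by push_cast; ring
        rw [this, mul_zero]
      · rw [ih hm, zero_mul]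

/-- The quadratic Gosper-certificate polynomial. -/
noncomputable def Epoly (n : ℕ) (a b : ℂ) (m : ℕ) : ℂ :=
  (b - 2) * (m : ℂ)^2 + (b * (b - 2) + (n : ℂ) * (1 - a)) * (m : ℂ)
    - (a * (n : ℂ) - b - (n : ℂ) + 2) * (b - 1)

/-- The telescoping antidifference. -/
noncomputable def Sfun (n : ℕ) (a b : ℂ) (m : ℕ) : ℂ :=
  Epoly n a b m * (ascPochhammer ℂ m).eval a * (ascPochhammer ℂ m).eval (1 - (n : ℂ)) /
    (((1 + a - b) * (b + (n : ℂ) - 2)) * (ascPochhammer ℂ m).eval b *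
      (ascPochhammer ℂ m).eval (2 + (n : ℂ)*(1 - a)/(b - 2)))

/-- The key scalar identity behind the telescoping. -/
lemma key_identity (n k : ℕ) (a b : ℂ) (hb2' : b - 2 ≠ 0) :
    ((k : ℂ) + 1) * ((1 + a - b) * (b + (n : ℂ) - 2)) *
        ((b + (k : ℂ)) * ((2 + (n : ℂ)*(1 - a)/(b - 2)) + (k : ℂ))) =
      Epoly n a b (k + 1) * ((a + (k : ℂ)) * ((1 - (n : ℂ)) + (k : ℂ)))
        - Epoly n a b k * ((b + (k : ℂ)) * ((2 + (n : ℂ)*(1 - a)/(b - 2)) + (k : ℂ))) := by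
  unfold Epoly
  push_cast
  field_simp
  ring

lemma Epoly_last (n k : ℕ) (a b : ℂ) (hcast : (n : ℂ) = (k : ℂ) + 1) :
    Epoly n a b k = -(n : ℂ) * ((1 + a - b) * (b + (n : ℂ) - 2)) := by
  unfold Epoly
  rw [hcast]
  ring

theorem stmt17 (n : ℕ) (hn : 0 < n) (a b : ℂ)
    (hb2 : b ≠ 2) (hab : 1 + a - b ≠ 0) (hbn : b + (n : ℂ) - 2 ≠ 0)
    (h1 : ∀ k < n, (ascPochhammer ℂ k).eval b ≠ 0)
    (h2 : ∀ k < n, (ascPochhammer ℂ k).eval (2 + (n : ℂ)*(1 - a)/(b - 2)) ≠ 0) :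
    hyp3F2 2 a (1 - (n : ℂ)) b (2 + (n : ℂ)*(1 - a)/(b - 2)) =
      (a*(n : ℂ) - b - (n : ℂ) + 2) * (b - 1) / ((1 + a - b) * (b + (n : ℂ) - 2)) := by
  have hb2' : b - 2 ≠ 0 := sub_ne_zero.mpr hb2
  have hDne : (1 + a - b) * (b + (n : ℂ) - 2) ≠ 0 := mul_ne_zero hab hbn
  have hsum : hyp3F2 2 a (1 - (n : ℂ)) b (2 + (n : ℂ)*(1 - a)/(b - 2)) =
      ∑ k ∈ range n,
        ((ascPochhammer ℂ k).eval 2 * (ascPochhammer ℂ k).eval a *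
            (ascPochhammer ℂ k).eval (1 - (n : ℂ))) /
          ((ascPochhammer ℂ k).eval b *
            (ascPochhammer ℂ k).eval (2 + (n : ℂ)*(1 - a)/(b - 2)) * (Nat.factorial k : ℂ)) := by
    unfold hyp3F2
    refine tsum_eq_sum fun k hk => ?_
    rw [mem_range, not_lt] at hk
    rw [asc_one_sub_n n k hn hk]
    simp
  rw [hsum]
  have hstep : ∀ k ∈ range n,
      ((ascPochhammer ℂ k).eval 2 * (ascPochhammer ℂ k).eval a *
          (ascPochhammer ℂ k).eval (1 - (n : ℂ))) /
        ((ascPochhammer ℂ k).eval b *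
          (ascPochhammer ℂ k).eval (2 + (n : ℂ)*(1 - a)/(b - 2)) * (Nat.factorial k : ℂ)) =
      Sfun n a b (k + 1) - Sfun n a b k := by
    intro k hk
    rw [mem_range] at hk
    have hwk := h1 k hk
    have hzk := h2 k hk
    have hfac : (Nat.factorial k : ℂ) ≠ 0 := Nat.cast_ne_zero.mpr (Nat.factorial_ne_zero k)
    rcases Nat.lt_or_ge (k + 1) n with hk1 | hk1
    · have hwk1 := h1 (k+1) hk1
      have hzk1 := h2 (k+1) hk1
      have hbk : b + (k : ℂ) ≠ 0 := fun h => hwk1 (by rw [ascPochhammer_succ_eval, h, mul_zero])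
      have hck : (2 + (n : ℂ)*(1 - a)/(b - 2)) + (k : ℂ) ≠ 0 :=
        fun h => hzk1 (by rw [ascPochhammer_succ_eval, h, mul_zero])
      unfold Sfun
      simp only [ascPochhammer_succ_eval, asc_two_eval]
      rw [eq_sub_iff_add_eq, div_add_div _ _
        (mul_ne_zero (mul_ne_zero hwk hzk) hfac)
        (mul_ne_zero (mul_ne_zero hDne hwk) hzk),
        div_eq_div_iff
        (mul_ne_zero (mul_ne_zero (mul_ne_zero hwk hzk) hfac)
          (mul_ne_zero (mul_ne_zero hDne hwk) hzk))
        (mul_ne_zero (mul_ne_zero hDne (mul_ne_zero hwk hbk)) (mul_ne_zero hzk hck))]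
      linear_combination ((ascPochhammer ℂ k).eval a * (ascPochhammer ℂ k).eval (1 - (n : ℂ)) *
        (ascPochhammer ℂ k).eval b * (ascPochhammer ℂ k).eval (2 + (n : ℂ)*(1 - a)/(b - 2)) *
        (Nat.factorial k : ℂ) * ((1 + a - b) * (b + (n : ℂ) - 2)) * (ascPochhammer ℂ k).eval b *
        (ascPochhammer ℂ k).eval (2 + (n : ℂ)*(1 - a)/(b - 2))) * key_identity n k a b hb2'
    · have hkn : k + 1 = n := by omega
      have hcast : (n : ℂ) = (k : ℂ) + 1 := by rw [← hkn]; push_cast; ring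
      have hSz : Sfun n a b (k+1) = 0 := by
        unfold Sfun
        rw [asc_one_sub_n n (k+1) hn (le_of_eq hkn.symm), mul_zero, zero_div]
      rw [hSz, zero_sub]
      unfold Sfun
      rw [Epoly_last n k a b hcast, asc_two_eval]
      rw [← neg_div, div_eq_div_iff
        (mul_ne_zero (mul_ne_zero hwk hzk) hfac)
        (mul_ne_zero (mul_ne_zero hDne hwk) hzk)]
      rw [hcast]
      ring
  rw [Finset.sum_congr rfl hstep, Finset.sum_range_sub (Sfun n a b) n]
  have hSn : Sfun n a b n = 0 := by
    unfold Sfun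
    rw [asc_one_sub_n n n hn le_rfl, mul_zero, zero_div]
  rw [hSn, zero_sub]
  unfold Sfun Epoly
  rw [ascPochhammer_zero]
  simp only [Nat.cast_zero, Polynomial.eval_one]
  field_simp
  ring
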